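/- Let r : M̂ → M be a covering map, let a, p, q ∈ M, x ∈ r⁻¹(a), let γ_p be a path from a to p, γ_q a path from a to q, and δ a path from p to q. Then for every loop φ based at a: G_δ(F^x_{γ_p}([φ])) = F^x_{γ_q}([φ] · [γ_p * δ * γ̄_q]); explicitly, δ^{(φ * γ_p)^x(1)}(1) = ((φ * (γ_p * δ * γ̄_q)) * γ_q)^x(1). That is, in terms of the labeling of the fibers, G_δ acts as right multiplication by the class [γ_p * δ * γ̄_q]. -/

import Mathlib

/-- `Γ` is a lift through `r` of the path `γ`, starting at `x` and ending at `z`. -/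
def IsPathLift {E X : Type*} [TopologicalSpace E] [TopologicalSpace X]
    (r : E → X) {a b : X} (γ : Path a b) {x z : E} (Γ : Path x z) : Prop :=
  ∀ t, r (Γ t) = γ t

theorem IsPathLift.extend_eq {E X : Type*} [TopologicalSpace E] [TopologicalSpace X]
    {r : E → X} {a b : X} {γ : Path a b} {x z : E} {Γ : Path x z}
    (h : IsPathLift r γ Γ) (s : ℝ) : r (Γ.extend s) = γ.extend s := h _

theorem trans_extend_left {X : Type*} [TopologicalSpace X] {a b c : X}
    (α : Path a b) (β : Path b c) {s : ℝ} (h0 : 0 ≤ s) (h : s ≤ 1/2) :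
    (α.trans β).extend s = α.extend (2*s) := by
  rw [Path.extend_apply _ ⟨h0, by linarith⟩, Path.trans_apply,
    Path.extend_apply α ⟨by linarith, by linarith⟩]
  split_ifs with hc
  · rfl
  · exact absurd h hc

theorem trans_extend_right {X : Type*} [TopologicalSpace X] {a b c : X}
    (α : Path a b) (β : Path b c) {s : ℝ} (h : 1/2 ≤ s) (h1 : s ≤ 1) :
    (α.trans β).extend s = β.extend (2*s - 1) := by
  rcases lt_or_eq_of_le h with h' | h'
  · rw [Path.extend_apply _ ⟨by linarith, h1⟩, Path.trans_apply,
      Path.extend_apply β ⟨by linarith, by linarith⟩]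
    split_ifs with hc
    · exact absurd hc (not_le.2 h')
    · rfl
  · rw [← h']
    have h2 : (2 : ℝ) * (1/2) - 1 = 0 := by norm_num
    have h3 : (2 : ℝ) * (1/2) = 1 := by norm_num
    rw [h2, Path.extend_zero, trans_extend_left α β (by norm_num) le_rfl, h3, Path.extend_one]

theorem symm_extend {X : Type*} [TopologicalSpace X] {a b : X}
    (γ : Path a b) {s : ℝ} (h0 : 0 ≤ s) (h1 : s ≤ 1) :
    γ.symm.extend s = γ.extend (1 - s) := by
  rw [Path.extend_apply _ ⟨h0, h1⟩, Path.extend_apply _ ⟨by linarith, by linarith⟩]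
  rfl

theorem lift_unique_endpoint {E X : Type*} [TopologicalSpace E] [TopologicalSpace X] {r : E → X}
    (hr : IsCoveringMap r) {g₁ g₂ : unitInterval → E} (h₁ : Continuous g₁) (h₂ : Continuous g₂)
    (he : ∀ t, r (g₁ t) = r (g₂ t)) (h0 : g₁ 0 = g₂ 0) : g₁ 1 = g₂ 1 :=
  congrFun (hr.eq_of_comp_eq h₁ h₂ (funext he) 0 h0) 1

/-- For a covering map `r`, points `a, p, q`, `x ∈ r⁻¹(a)`, paths `γ_p : a → p`, `γ_q : a → q` and
`δ : p → q`, for every loop `φ` at `a`: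
`G_δ(F^x_{γ_p}([φ])) = F^x_{γ_q}([φ] · [γ_p * δ * γ̄_q])`, explicitly
`δ^{(φ * γ_p)^x(1)}(1) = ((φ * (γ_p * δ * γ̄_q)) * γ_q)^x(1)`; that is, in terms of the labeling of
the fibers, `G_δ` acts as right multiplication by the class `[γ_p * δ * γ̄_q]`. -/
theorem fiber_transport_is_right_multiplication
    {E X : Type*} [TopologicalSpace E] [TopologicalSpace X]
    (r : E → X) (hr : IsCoveringMap r)
    (a p q : X) (x : E) (hx : r x = a)
    (γp : Path a p) (γq : Path a q) (δ : Path p q) :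
    ∀ (φ : Path a a) (z₁ : E) (Γ₁ : Path x z₁) (w : E) (Δ : Path z₁ w)
      (z₂ : E) (Γ₂ : Path x z₂),
      IsPathLift r (φ.trans γp) Γ₁ →
      IsPathLift r δ Δ →
      IsPathLift r ((φ.trans ((γp.trans δ).trans γq.symm)).trans γq) Γ₂ →
      w = z₂ := by
  intro φ z₁ Γ₁ w Δ z₂ Γ₂ hΓ₁ hΔ hΓ₂
  set ψ : Path a a := (γp.trans δ).trans γq.symm with hψ
  set Θ : Path a q := (φ.trans ψ).trans γq with hΘ
  -- base path computations
  have ht : ∀ t : unitInterval, (0:ℝ) ≤ t ∧ (t:ℝ) ≤ 1 := fun t => ⟨t.2.1, t.2.2⟩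
  have base1 : ∀ t : unitInterval, Θ.extend (t/4) = φ.extend t := by
    intro t; obtain ⟨h0, h1⟩ := ht t
    rw [trans_extend_left _ _ (by linarith) (by linarith),
      trans_extend_left _ _ (by linarith) (by linarith)]
    ring_nf
  have base2 : ∀ t : unitInterval, Θ.extend (1/4 + t/16) = γp.extend t := by
    intro t; obtain ⟨h0, h1⟩ := ht t
    rw [trans_extend_left _ _ (by linarith) (by linarith),
      trans_extend_right _ _ (by linarith) (by linarith),
      trans_extend_left _ _ (by linarith) (by linarith),
      trans_extend_left _ _ (by linarith) (by linarith)]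
    ring_nf
  have base3 : ∀ t : unitInterval, Θ.extend (5/16 + t/16) = δ.extend t := by
    intro t; obtain ⟨h0, h1⟩ := ht t
    rw [trans_extend_left _ _ (by linarith) (by linarith),
      trans_extend_right _ _ (by linarith) (by linarith),
      trans_extend_left _ _ (by linarith) (by linarith),
      trans_extend_right _ _ (by linarith) (by linarith)]
    ring_nf
  have base4 : ∀ t : unitInterval, Θ.extend (1/2 - t/8) = γq.extend t := by
    intro t; obtain ⟨h0, h1⟩ := ht t
    rw [trans_extend_left _ _ (by linarith) (by linarith),
      trans_extend_right _ _ (by linarith) (by linarith),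
      trans_extend_right _ _ (by linarith) (by linarith),
      symm_extend _ (by linarith) (by linarith)]
    ring_nf
  have base5 : ∀ t : unitInterval, Θ.extend (1/2 + t/2) = γq.extend t := by
    intro t; obtain ⟨h0, h1⟩ := ht t
    rw [trans_extend_right _ _ (by linarith) (by linarith)]
    ring_nf
  have base1' : ∀ t : unitInterval, (φ.trans γp).extend (t/2) = φ.extend t := by
    intro t; obtain ⟨h0, h1⟩ := ht t
    rw [trans_extend_left _ _ (by linarith) (by linarith)]
    ring_nf
  have base2' : ∀ t : unitInterval, (φ.trans γp).extend (1/2 + t/2) = γp.extend t := by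
    intro t; obtain ⟨h0, h1⟩ := ht t
    rw [trans_extend_right _ _ (by linarith) (by linarith)]
    ring_nf
  -- Step A : Γ₁(1/2) = Γ₂(1/4)
  have hA : Γ₁.extend (1/2) = Γ₂.extend (1/4) := by
    have := lift_unique_endpoint hr (g₁ := fun t => Γ₁.extend (t/2))
      (g₂ := fun t => Γ₂.extend (t/4))
      (Γ₁.continuous_extend.comp (by fun_prop))
      (Γ₂.continuous_extend.comp (by fun_prop))
      (fun t => by rw [hΓ₁.extend_eq, hΓ₂.extend_eq, base1' t, base1 t]) (by simp)
    norm_num at this ⊢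
    exact this
  -- Step B : z₁ = Γ₂(5/16)
  have hB : z₁ = Γ₂.extend (5/16) := by
    have := lift_unique_endpoint hr (g₁ := fun t => Γ₁.extend (1/2 + t/2))
      (g₂ := fun t => Γ₂.extend (1/4 + t/16))
      (Γ₁.continuous_extend.comp (by fun_prop))
      (Γ₂.continuous_extend.comp (by fun_prop))
      (fun t => by rw [hΓ₁.extend_eq, hΓ₂.extend_eq, base2' t, base2 t]) (by simpa using hA)
    norm_num [Path.extend_one] at this ⊢
    exact this
  -- Step C : w = Γ₂(3/8)
  have hC : w = Γ₂.extend (3/8) := by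
    have := lift_unique_endpoint hr (g₁ := fun t => Δ.extend t)
      (g₂ := fun t => Γ₂.extend (5/16 + t/16))
      (Δ.continuous_extend.comp (by fun_prop))
      (Γ₂.continuous_extend.comp (by fun_prop))
      (fun t => by rw [hΔ.extend_eq, hΓ₂.extend_eq, base3 t]) (by simpa using hB)
    norm_num [Path.extend_one] at this ⊢
    exact this
  -- Step D : Γ₂(3/8) = z₂
  have hD : Γ₂.extend (3/8) = z₂ := by
    have := lift_unique_endpoint hr (g₁ := fun t => Γ₂.extend (1/2 - t/8))
      (g₂ := fun t => Γ₂.extend (1/2 + t/2))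
      (Γ₂.continuous_extend.comp (by fun_prop))
      (Γ₂.continuous_extend.comp (by fun_prop))
      (fun t => by rw [hΓ₂.extend_eq, hΓ₂.extend_eq, base4 t, base5 t]) (by norm_num)
    norm_num [Path.extend_one] at this ⊢
    exact this
  rw [hC, hD]
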